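/- Let τ be an M-topology on M : X → ℕ and let A : X → ℕ be a sub-M-set of M. Then (bd(A))ᶜ = int(A) ∪ ext(A), i.e., for every x ∈ X, M(x) − bd(A)(x) = max(int(A)(x), ext(A)(x)). -/
import Mathlib


/-- M-complement of a sub-M-set: `Aᶜ = M ⊖ A` (pointwise truncated subtraction). -/
def mcompl {X : Type*} (M A : X → ℕ) : X → ℕ := fun x => M x - A x

/-- `τ` is an M-topology on the multiset `M : X → ℕ`. -/
structure IsMTopology {X : Type*} (M : X → ℕ) (τ : Set (X → ℕ)) : Prop where
  le_of_mem : ∀ N ∈ τ, N ≤ M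
  top_mem : M ∈ τ
  zero_mem : (0 : X → ℕ) ∈ τ
  sSup_mem : ∀ S ⊆ τ, (fun x => sSup {n | ∃ N ∈ S, N x = n}) ∈ τ
  min_mem : ∀ U ∈ τ, ∀ V ∈ τ, (fun x => min (U x) (V x)) ∈ τ

/-- Interior: pointwise supremum of all open `G ∈ τ` with `G ≤ A`. -/
noncomputable def mint {X : Type*} (τ : Set (X → ℕ)) (A : X → ℕ) : X → ℕ :=
  fun x => sSup {n | ∃ G ∈ τ, G ≤ A ∧ G x = n}

/-- Closure: pointwise infimum of all closed `K` with `A ≤ K ≤ M`. -/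
noncomputable def mcl {X : Type*} (M : X → ℕ) (τ : Set (X → ℕ)) (A : X → ℕ) : X → ℕ :=
  fun x => sInf {n | ∃ K, mcompl M K ∈ τ ∧ A ≤ K ∧ K ≤ M ∧ K x = n}

/-- Exterior: interior of the M-complement. -/
noncomputable def mext {X : Type*} (M : X → ℕ) (τ : Set (X → ℕ)) (A : X → ℕ) : X → ℕ :=
  mint τ (mcompl M A)

/-- Boundary: `bd(A) = cl(A) ∩ cl(Aᶜ)` (pointwise min). -/
noncomputable def mbd {X : Type*} (M : X → ℕ) (τ : Set (X → ℕ)) (A : X → ℕ) : X → ℕ :=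
  fun x => min (mcl M τ A x) (mcl M τ (mcompl M A) x)

lemma mint_mem_aux {X : Type*} {M : X → ℕ} {τ : Set (X → ℕ)} (hτ : IsMTopology M τ)
    (B : X → ℕ) (x : X) : mint τ B x ∈ {n | ∃ G ∈ τ, G ≤ B ∧ G x = n} := by
  apply Nat.sSup_mem
  · exact ⟨0, 0, hτ.zero_mem, fun y => Nat.zero_le _, rfl⟩
  · exact ⟨M x, by rintro n ⟨G, hG, _, rfl⟩; exact hτ.le_of_mem G hG x⟩

lemma mint_le {X : Type*} {M : X → ℕ} {τ : Set (X → ℕ)} (hτ : IsMTopology M τ)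
    (B : X → ℕ) (hB : B ≤ M) (x : X) : mint τ B x ≤ B x := by
  obtain ⟨G, _, hGB, hGx⟩ := mint_mem_aux hτ B x
  exact hGx ▸ hGB x

lemma mcl_eq {X : Type*} {M : X → ℕ} {τ : Set (X → ℕ)} (hτ : IsMTopology M τ)
    (B : X → ℕ) (hB : B ≤ M) (x : X) :
    mcl M τ B x = M x - mint τ (mcompl M B) x := by
  apply le_antisymm
  · obtain ⟨G, hG, hGB, hGx⟩ := mint_mem_aux hτ (mcompl M B) x
    apply Nat.sInf_le
    refine ⟨mcompl M G, ?_, ?_, ?_, ?_⟩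
    · have : mcompl M (mcompl M G) = G := by
        funext y
        have h : G y ≤ M y := hτ.le_of_mem G hG y
        simp only [mcompl]; omega
      rw [this]; exact hG
    · intro y
      have h1 : G y ≤ mcompl M B y := hGB y
      have h2 : B y ≤ M y := hB y
      simp only [mcompl] at h1 ⊢
      omega
    · intro y; exact Nat.sub_le _ _
    · simp [mcompl, hGx]
  · apply le_csInf
    · have : mcompl M M = (0 : X → ℕ) := by funext y; simp [mcompl]
      exact ⟨M x, M, this ▸ hτ.zero_mem, hB, le_refl M, rfl⟩
    · rintro n ⟨K, hK, hBK, hKM, rfl⟩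
      have h1 : mcompl M K x ≤ mint τ (mcompl M K) x := by
        apply le_csSup
        · exact ⟨M x, by rintro m ⟨G, hG, _, rfl⟩; exact hτ.le_of_mem G hG x⟩
        · exact ⟨mcompl M K, hK, le_refl _, rfl⟩
      have h2 : mint τ (mcompl M K) x ≤ mint τ (mcompl M B) x := by
        apply csSup_le_csSup
        · exact ⟨M x, by rintro m ⟨G, hG, _, rfl⟩; exact hτ.le_of_mem G hG x⟩
        · exact ⟨0, 0, hτ.zero_mem, fun y => Nat.zero_le _, rfl⟩
        · rintro m ⟨G, hG, hGK, rfl⟩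
          exact ⟨G, hG, fun y => le_trans (hGK y) (Nat.sub_le_sub_left (hBK y) (M y)), rfl⟩
      have h3 : mcompl M K x = M x - K x := rfl
      have h4 : K x ≤ M x := hKM x
      omega

theorem compl_bd_eq_int_union_ext {X : Type*} (M : X → ℕ) (τ : Set (X → ℕ))
    (hτ : IsMTopology M τ) (A : X → ℕ) (hA : A ≤ M) :
    ∀ x, M x - mbd M τ A x = max (mint τ A x) (mext M τ A x) := by
  intro x
  have hAc : mcompl M A ≤ M := fun y => Nat.sub_le _ _
  have hcc : mcompl M (mcompl M A) = A := by
    funext y; have h : A y ≤ M y := hA y; simp only [mcompl]; omega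
  have h1 : mcl M τ A x = M x - mext M τ A x := mcl_eq hτ A hA x
  have h2 : mcl M τ (mcompl M A) x = M x - mint τ A x := by
    have := mcl_eq hτ (mcompl M A) hAc x
    rwa [hcc] at this
  have h3 : mint τ A x ≤ M x := le_trans (mint_le hτ A hA x) (hA x)
  have h4 : mext M τ A x ≤ M x := le_trans (mint_le hτ (mcompl M A) hAc x) (hAc x)
  simp only [mbd, h1, h2]
  omega
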